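/- arXiv:1402.0904 — 2 statements merged into one kernel-verified Lean document; each statement's English description precedes it below -/
import Mathlib

section
/- Let K be a centrally-symmetric convex body in R^n with B_2^n ⊆ ρK for some ρ ≥ 1. Suppose W is an m-dimensional linear subspace of R^n such that P_{W^⊥}(K) ⊇ B_2^n ∩ W^⊥. Then N(B_2^n, 4K) ≤ (3ρ)^m. -/
open MeasureTheory Metric
open scoped RealInnerProductSpace ENNReal Pointwise

/-- volume-radius of a subset of a finite-dimensional inner product space,
computed via an isometry with the standard Euclidean space. -/
noncomputable def vr (S : Type) [NormedAddCommGroup S] [InnerProductSpace ℝ S]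
    [FiniteDimensional ℝ S] (A : Set S) : ℝ :=
  ((volume ((stdOrthonormalBasis ℝ S).repr '' A)).toReal /
    (volume (closedBall (0 : EuclideanSpace ℝ (Fin (Module.finrank ℝ S))) 1)).toReal) ^
      ((1 : ℝ) / (Module.finrank ℝ S))

/-- `w_k(K)`: supremum of volume-radii of `k`-dimensional central sections. -/
noncomputable def wk {n : ℕ} (K : Set (EuclideanSpace ℝ (Fin n))) (k : ℕ) : ℝ :=
  sSup { r | ∃ F : Submodule ℝ (EuclideanSpace ℝ (Fin n)),
    Module.finrank ℝ F = k ∧ r = vr F ((↑·) ⁻¹' K) }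

/-- `w_k^-(K)`: infimum of volume-radii of `k`-dimensional central sections. -/
noncomputable def wkMinus {n : ℕ} (K : Set (EuclideanSpace ℝ (Fin n))) (k : ℕ) : ℝ :=
  sInf { r | ∃ F : Submodule ℝ (EuclideanSpace ℝ (Fin n)),
    Module.finrank ℝ F = k ∧ r = vr F ((↑·) ⁻¹' K) }

/-- `v_k(K)`: supremum of volume-radii of `k`-dimensional orthogonal projections. -/
noncomputable def vk {n : ℕ} (K : Set (EuclideanSpace ℝ (Fin n))) (k : ℕ) : ℝ :=
  sSup { r | ∃ F : Submodule ℝ (EuclideanSpace ℝ (Fin n)),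
    Module.finrank ℝ F = k ∧ r = vr F ((Submodule.orthogonalProjectionOnto F) '' K) }

/-- `v_k^-(K)`: infimum of volume-radii of `k`-dimensional orthogonal projections. -/
noncomputable def vkMinus {n : ℕ} (K : Set (EuclideanSpace ℝ (Fin n))) (k : ℕ) : ℝ :=
  sInf { r | ∃ F : Submodule ℝ (EuclideanSpace ℝ (Fin n)),
    Module.finrank ℝ F = k ∧ r = vr F ((Submodule.orthogonalProjectionOnto F) '' K) }

/-- covering number `N(A, B)`: minimal number of translates of `B` covering `A`. -/
noncomputable def covN {E : Type} [AddGroup E] (A B : Set E) : ℕ :=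
  sInf {N | ∃ t : Finset E, t.card = N ∧ A ⊆ ⋃ x ∈ t, x +ᵥ B}

/-- entropy numbers `e_k(A, B)`. -/
noncomputable def ek {E : Type} [NormedAddCommGroup E] [NormedSpace ℝ E]
    (A B : Set E) (k : ℕ) : ℝ :=
  sInf {t : ℝ | 0 < t ∧ covN A (t • B) ≤ 2 ^ k}

/-- Gelfand numbers `c_k(K)` (w.r.t. the Euclidean ball). -/
noncomputable def ck {n : ℕ} (K : Set (EuclideanSpace ℝ (Fin n))) (k : ℕ) : ℝ :=
  sInf {R | 0 < R ∧ ∃ F : Submodule ℝ (EuclideanSpace ℝ (Fin n)),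
    Module.finrank ℝ F = n - k ∧ K ∩ (F : Set (EuclideanSpace ℝ (Fin n))) ⊆ closedBall 0 R}

/-- the `L_q`-centroid body `Z_q(μ)`, defined as the convex set with support function
`y ↦ (∫ |⟨x,y⟩|^q dμ)^{1/q}`. -/
noncomputable def Zbody {S : Type} [NormedAddCommGroup S] [InnerProductSpace ℝ S]
    [MeasurableSpace S] (μ : Measure S) (q : ℝ) : Set S :=
  {x | ∀ y, ⟪x, y⟫ ≤ (∫ z, |⟪z, y⟫| ^ q ∂μ) ^ (1 / q)}

/-- the polar body. -/
def pol {S : Type} [NormedAddCommGroup S] [InnerProductSpace ℝ S] (A : Set S) : Set S :=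
  {y | ∀ x ∈ A, ⟪x, y⟫ ≤ 1}

section EntropyExtensionAux
open Set

-- card bound for separated sets
lemma sep_card {d : ℕ} (C : Set (EuclideanSpace ℝ (Fin d)))
    (hCcomp : IsCompact C) (hCconv : Convex ℝ C) (hCsymm : C = -C)
    (hC0 : volume C ≠ 0)
    (T s : ℝ) (hT : 0 ≤ T) (hs : 0 < s)
    (t : Finset (EuclideanSpace ℝ (Fin d)))
    (hsub : ↑t ⊆ T • C)
    (hsep : ∀ x ∈ t, ∀ y ∈ t, x ≠ y → x - y ∉ s • C) :
    (t.card : ℝ) ≤ (1 + 2 * T / s) ^ d := by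
  set r : ℝ := s / 2 with hr
  have hrpos : 0 < r := by positivity
  have hVfin : volume C ≠ ⊤ := hCcomp.measure_lt_top.ne
  -- disjointness
  have hdisj : (↑t : Set (EuclideanSpace ℝ (Fin d))).PairwiseDisjoint
      (fun x => x +ᵥ r • C) := by
    intro x hx y hy hxy
    rw [Function.onFun, Set.disjoint_left]
    intro z hzx hzy
    obtain ⟨c1, hc1, hz1⟩ := hzx
    obtain ⟨c2, hc2, hz2⟩ := hzy
    obtain ⟨a, ha, rfl⟩ := hc1
    obtain ⟨b, hb, rfl⟩ := hc2
    apply hsep x hx y hy hxy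
    simp only [vadd_eq_add] at hz1 hz2
    have hxysub : x - y = r • b + r • (-a) := by
      have : x + r • a = y + r • b := hz1.trans hz2.symm
      simp only [smul_neg]
      abel_nf
      linear_combination (norm := module) this
    have hna : -a ∈ C := by rw [hCsymm]; exact Set.neg_mem_neg.mpr ha
    have : x - y ∈ r • C + r • C := by
      rw [hxysub]; exact Set.add_mem_add ⟨b, hb, rfl⟩ ⟨-a, hna, rfl⟩
    rwa [← hCconv.add_smul hrpos.le hrpos.le, show r + r = s by rw [hr]; ring] at this
  -- measurability
  have hmeas : ∀ x : EuclideanSpace ℝ (Fin d), MeasurableSet (x +ᵥ r • C) := by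
    intro x
    have h1 : IsCompact (r • C) := hCcomp.smul r
    have h2 : IsCompact (x +ᵥ r • C) := h1.vadd x
    exact h2.isClosed.measurableSet
  -- union inside (T+r) • C
  have hunion : (⋃ x ∈ t, x +ᵥ r • C) ⊆ (T + r) • C := by
    intro z hz
    simp only [Set.mem_iUnion] at hz
    obtain ⟨x, hx, hzx⟩ := hz
    obtain ⟨c, hc, rfl⟩ := hzx
    rw [hCconv.add_smul hT hrpos.le]; show x + c ∈ _
    exact Set.add_mem_add (hsub hx) hc
  -- volume computation
  have hvol : (t.card : ℝ≥0∞) * (ENNReal.ofReal (r ^ d) * volume C)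
      ≤ ENNReal.ofReal ((T + r) ^ d) * volume C := by
    calc (t.card : ℝ≥0∞) * (ENNReal.ofReal (r ^ d) * volume C)
        = ∑ _x ∈ t, ENNReal.ofReal (r ^ d) * volume C := by
          rw [Finset.sum_const, nsmul_eq_mul]
      _ = ∑ x ∈ t, volume (x +ᵥ r • C) := by
          apply Finset.sum_congr rfl
          intro x _
          rw [measure_vadd, Measure.addHaar_smul_of_nonneg _ hrpos.le,
            finrank_euclideanSpace_fin]
      _ = volume (⋃ x ∈ t, x +ᵥ r • C) := (measure_biUnion_finset hdisj fun x _ => hmeas x).symm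
      _ ≤ volume ((T + r) • C) := measure_mono hunion
      _ = ENNReal.ofReal ((T + r) ^ d) * volume C := by
          rw [Measure.addHaar_smul_of_nonneg _ (by positivity), finrank_euclideanSpace_fin]
  rw [← mul_assoc] at hvol
  have hvol2 : (t.card : ℝ≥0∞) * ENNReal.ofReal (r ^ d) ≤ ENNReal.ofReal ((T + r) ^ d) :=
    (ENNReal.mul_le_mul_iff_left hC0 hVfin).mp hvol
  have hkey : ENNReal.ofReal ((T + r) ^ d) = ENNReal.ofReal ((1 + 2 * T / s) ^ d) *
      ENNReal.ofReal (r ^ d) := by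
    rw [← ENNReal.ofReal_mul (by positivity), ← mul_pow]
    congr 2
    field_simp
    ring
  rw [hkey] at hvol2
  have := (ENNReal.mul_le_mul_iff_left (by positivity) ENNReal.ofReal_ne_top).mp hvol2
  rwa [← ENNReal.ofReal_natCast, ENNReal.ofReal_le_ofReal_iff (by positivity)] at this

lemma cover_exists {d : ℕ} (C : Set (EuclideanSpace ℝ (Fin d)))
    (hCcomp : IsCompact C) (hCconv : Convex ℝ C) (hCsymm : C = -C)
    (hC0 : volume C ≠ 0)
    (T s : ℝ) (hT : 0 ≤ T) (hs : 0 < s) :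
    ∃ t : Finset (EuclideanSpace ℝ (Fin d)),
      (t.card : ℝ) ≤ (1 + 2 * T / s) ^ d ∧ T • C ⊆ ⋃ x ∈ t, x +ᵥ s • C := by
  classical
  have h0C : (0 : EuclideanSpace ℝ (Fin d)) ∈ C := by
    obtain ⟨c, hc⟩ := nonempty_of_measure_ne_zero hC0
    have hnc : -c ∈ C := by rw [hCsymm]; exact Set.neg_mem_neg.mpr hc
    have := hCconv hc hnc (by norm_num : (0:ℝ) ≤ 1/2) (by norm_num : (0:ℝ) ≤ 1/2) (by norm_num)
    simpa using this
  set P : Finset (EuclideanSpace ℝ (Fin d)) → Prop :=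
    fun t => ↑t ⊆ T • C ∧ ∀ x ∈ t, ∀ y ∈ t, x ≠ y → x - y ∉ s • C with hP
  set S : Set ℕ := {k | ∃ t, P t ∧ t.card = k} with hS
  have hSne : S.Nonempty := ⟨0, ∅, ⟨by simp, by simp⟩, rfl⟩
  have hSbdd : BddAbove S := by
    refine ⟨⌊(1 + 2 * T / s) ^ d⌋₊, ?_⟩
    rintro k ⟨t, ⟨h1, h2⟩, rfl⟩
    exact Nat.le_floor (sep_card C hCcomp hCconv hCsymm hC0 T s hT hs t h1 h2)
  obtain ⟨t, ⟨hPt1, hPt2⟩, hcard⟩ := Nat.sSup_mem hSne hSbdd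
  refine ⟨t, sep_card C hCcomp hCconv hCsymm hC0 T s hT hs t hPt1 hPt2, ?_⟩
  intro p hp
  by_contra hcov
  simp only [Set.mem_iUnion, not_exists] at hcov
  have hpmem : ∀ x ∈ t, p - x ∉ s • C := by
    intro x hx hmem
    exact hcov x hx ⟨p - x, hmem, by simp [vadd_eq_add]⟩
  have hpt : p ∉ t := by
    intro hpt
    exact hpmem p hpt (by simpa using ⟨0, h0C, by simp⟩)
  have hPins : P (insert p t) := by
    constructor
    · intro z hz
      simp only [Finset.coe_insert, Set.mem_insert_iff] at hz
      rcases hz with rfl | hz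
      · exact hp
      · exact hPt1 hz
    · intro x hx y hy hxy
      simp only [Finset.mem_insert] at hx hy
      have hsneg : ∀ z : EuclideanSpace ℝ (Fin d), z ∈ s • C → -z ∈ s • C := by
        rintro z ⟨c, hc, rfl⟩
        refine ⟨-c, by rw [hCsymm]; exact Set.neg_mem_neg.mpr hc, by simp⟩
      rcases hx with rfl | hx
      · rcases hy with rfl | hy
        · exact absurd rfl hxy
        · exact hpmem y hy
      · rcases hy with rfl | hy
        · intro hmem
          exact hpmem x hx (by simpa using hsneg _ hmem)
        · exact hPt2 x hx y hy hxy
  have : t.card + 1 ∈ S := ⟨insert p t, hPins, by rw [Finset.card_insert_of_notMem hpt]⟩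
  have := le_csSup hSbdd this
  omega

end EntropyExtensionAux

/-- entropy extension lemma: `B₂ⁿ ⊆ ρK` and `P_{W^⊥}K ⊇ B_{W^⊥}`
imply `N(B₂ⁿ, 4K) ≤ (3ρ)^m`. -/
theorem stmt6 (n : ℕ) (hn : 1 ≤ n) (K : Set (EuclideanSpace ℝ (Fin n)))
    (hKcomp : IsCompact K) (hKconv : Convex ℝ K) (hKsymm : K = -K)
    (hKint : (interior K).Nonempty)
    (ρ : ℝ) (hρ : 1 ≤ ρ)
    (hball : closedBall (0 : EuclideanSpace ℝ (Fin n)) 1 ⊆ ρ • K)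
    (W : Submodule ℝ (EuclideanSpace ℝ (Fin n))) (m : ℕ)
    (hW : Module.finrank ℝ W = m)
    (hproj : closedBall (0 : ↥Wᗮ) 1 ⊆ (Submodule.orthogonalProjectionOnto Wᗮ) '' K) :
    (covN (closedBall (0 : EuclideanSpace ℝ (Fin n)) 1) ((4 : ℝ) • K) : ℝ) ≤ (3 * ρ) ^ m := by
  subst hW
  classical
  set d := Module.finrank ℝ W with hd
  have hρ0 : (0:ℝ) < ρ := lt_of_lt_of_le one_pos hρ
  -- small ball inside K
  have hsmall : ∀ z : EuclideanSpace ℝ (Fin n), ‖z‖ ≤ ρ⁻¹ → z ∈ K := by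
    intro z hz
    have h1 : ρ • z ∈ closedBall (0 : EuclideanSpace ℝ (Fin n)) 1 := by
      rw [mem_closedBall_zero_iff, norm_smul, Real.norm_eq_abs, abs_of_pos hρ0]
      calc ρ * ‖z‖ ≤ ρ * ρ⁻¹ := by gcongr
        _ = 1 := mul_inv_cancel₀ hρ0.ne'
    obtain ⟨k, hk, hkz⟩ := hball h1
    have hzk : k = z := by
      have := congrArg (fun w => ρ⁻¹ • w) hkz
      simpa [smul_smul, inv_mul_cancel₀ hρ0.ne'] using this
    rwa [← hzk]
  -- the isometry between W and the standard d-dimensional space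
  set J : W ≃ₗᵢ[ℝ] EuclideanSpace ℝ (Fin d) := (stdOrthonormalBasis ℝ W).repr with hJ
  set CW : Set W := ((↑) : W → EuclideanSpace ℝ (Fin n)) ⁻¹' K with hCW
  set C : Set (EuclideanSpace ℝ (Fin d)) := J '' CW with hC
  have hCWcomp : IsCompact CW := by
    apply Metric.isCompact_of_isClosed_isBounded
    · exact hKcomp.isClosed.preimage continuous_subtype_val
    · obtain ⟨R, hR⟩ := hKcomp.isBounded.subset_closedBall 0
      refine (Metric.isBounded_closedBall (x := (0:W)) (r := R)).subset ?_
      intro w hw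
      rw [mem_closedBall_zero_iff]
      have : ‖(w : EuclideanSpace ℝ (Fin n))‖ ≤ R := mem_closedBall_zero_iff.mp (hR hw)
      simpa using this
  have hCcomp : IsCompact C := hCWcomp.image J.continuous
  have hCWconv : Convex ℝ CW := hKconv.linear_preimage (W.subtype)
  have hCconv : Convex ℝ C := by have := hCWconv.linear_image (J.toLinearEquiv : W →ₗ[ℝ] EuclideanSpace ℝ (Fin d)); exact this
  have hCneg : ∀ v ∈ C, -v ∈ C := by
    rintro v ⟨w, hw, rfl⟩
    refine ⟨-w, ?_, by simp⟩
    have : -(w : EuclideanSpace ℝ (Fin n)) ∈ K := by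
      rw [hKsymm]; exact Set.neg_mem_neg.mpr hw
    simpa [hCW] using this
  have hCsymm : C = -C :=
    Set.ext fun v => ⟨fun h => Set.mem_neg.mpr (hCneg v h),
      fun h => by simpa using hCneg (-v) (Set.mem_neg.mp h)⟩
  have hC0 : volume C ≠ 0 := by
    have hsub : closedBall (0 : EuclideanSpace ℝ (Fin d)) ρ⁻¹ ⊆ C := by
      intro v hv
      have hnv : ‖v‖ ≤ ρ⁻¹ := mem_closedBall_zero_iff.mp hv
      refine ⟨J.symm v, ?_, by simp⟩
      have hnormeq : ‖((J.symm v : W) : EuclideanSpace ℝ (Fin n))‖ = ‖v‖ := by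
        rw [← J.symm.norm_map v]; rfl
      exact hsmall _ (by rw [hnormeq]; exact hnv)
    have := measure_mono (μ := (volume : Measure (EuclideanSpace ℝ (Fin d)))) hsub
    have hpos : (0:ℝ≥0∞) < volume (closedBall (0 : EuclideanSpace ℝ (Fin d)) ρ⁻¹) :=
      measure_closedBall_pos _ _ (by positivity)
    exact fun h => absurd (le_trans this h.le) (by simpa using hpos.ne')
  obtain ⟨t', hcard, hcov⟩ := cover_exists C hCcomp hCconv hCsymm hC0 (ρ + 1) 3
    (by linarith) (by norm_num)
  set t : Finset (EuclideanSpace ℝ (Fin n)) :=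
    t'.image (fun v => ((J.symm v : W) : EuclideanSpace ℝ (Fin n))) with ht
  have hBcov : closedBall (0 : EuclideanSpace ℝ (Fin n)) 1 ⊆
      ⋃ x ∈ t, x +ᵥ (4:ℝ) • K := by
    intro x hx
    have hxnorm : ‖x‖ ≤ 1 := mem_closedBall_zero_iff.mp hx
    have hu : Submodule.orthogonalProjectionOnto Wᗮ x ∈ closedBall (0 : ↥Wᗮ) 1 := by
      rw [mem_closedBall_zero_iff]
      calc ‖Submodule.orthogonalProjectionOnto Wᗮ x‖ ≤ 1 * ‖x‖ :=
            (Submodule.orthogonalProjectionOnto Wᗮ).le_of_opNorm_le (Submodule.orthogonalProjectionOnto_norm_le _) x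
        _ ≤ 1 := by linarith
    obtain ⟨y, hyK, hyu⟩ := hproj hu
    have hwW : x - y ∈ W := by
      rw [← Submodule.orthogonal_orthogonal W, ← Submodule.orthogonalProjectionOnto_eq_zero_iff,
        map_sub, hyu, sub_self]
    have hwmem : x - y ∈ (ρ + 1) • K := by
      rw [hKconv.add_smul hρ0.le zero_le_one, sub_eq_add_neg]
      refine Set.add_mem_add (hball hx) ?_
      rw [one_smul, hKsymm]
      exact Set.neg_mem_neg.mpr hyK
    set w' : W := ⟨x - y, hwW⟩ with hw'
    have hJw' : J w' ∈ (ρ + 1) • C := by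
      obtain ⟨k, hk, hkw⟩ := hwmem
      have hkW : k ∈ W := by
        have : k = (ρ + 1)⁻¹ • (x - y) := by
          rw [← hkw, smul_smul, inv_mul_cancel₀ (by positivity), one_smul]
        rw [this]
        exact W.smul_mem _ hwW
      set k' : W := ⟨k, hkW⟩ with hk'
      have hwk : w' = (ρ + 1) • k' := Subtype.ext (by simp [hw', hk', ← hkw])
      exact ⟨J k', ⟨k', hk, rfl⟩, by show (ρ + 1) • J k' = J w'; rw [hwk, _root_.map_smul]⟩
    obtain ⟨v, hv, hmem⟩ := Set.mem_iUnion₂.mp (hcov hJw')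
    obtain ⟨c3, hc3, hvc⟩ := hmem
    obtain ⟨cc, hccC, rfl⟩ := hc3
    obtain ⟨c'', hc'', rfl⟩ := hccC
    simp only [vadd_eq_add] at hvc
    -- hvc : v + 3 • J c'' = J w'
    have hWeq : J.symm v + (3:ℝ) • c'' = w' := by
      have := congrArg J.symm hvc
      simpa [map_add, _root_.map_smul] using this
    have hEeq : ((J.symm v : W) : EuclideanSpace ℝ (Fin n)) +
        (3:ℝ) • (c'' : EuclideanSpace ℝ (Fin n)) = x - y := by
      have := congrArg (Subtype.val) hWeq
      simpa using this
    have hfinal : (3:ℝ) • (c'' : EuclideanSpace ℝ (Fin n)) + y ∈ (4:ℝ) • K := by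
      rw [show (4:ℝ) = 3 + 1 by norm_num, hKconv.add_smul (by norm_num) zero_le_one]
      refine Set.add_mem_add ⟨(c'' : EuclideanSpace ℝ (Fin n)), hc'', rfl⟩ ?_
      rwa [one_smul]
    refine Set.mem_iUnion₂.mpr ⟨((J.symm v : W) : EuclideanSpace ℝ (Fin n)), ?_, ?_⟩
    · exact Finset.mem_image_of_mem _ hv
    · refine ⟨(3:ℝ) • (c'' : EuclideanSpace ℝ (Fin n)) + y, hfinal, ?_⟩
      simp only [vadd_eq_add]
      rw [← add_assoc, hEeq]
      abel
  have hN : covN (closedBall (0 : EuclideanSpace ℝ (Fin n)) 1) ((4:ℝ) • K) ≤ t.card :=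
    Nat.sInf_le ⟨t, rfl, hBcov⟩
  calc (covN (closedBall (0 : EuclideanSpace ℝ (Fin n)) 1) ((4:ℝ) • K) : ℝ)
      ≤ t.card := Nat.cast_le.mpr hN
    _ ≤ t'.card := Nat.cast_le.mpr Finset.card_image_le
    _ ≤ (1 + 2 * (ρ + 1) / 3) ^ d := hcard
    _ ≤ (3 * ρ) ^ d := by
        apply pow_le_pow_left₀ (by positivity)
        linarith
end

section
/- Let ℰ be a centered ellipsoid in R^n with semi-axes λ_1 ≥ ⋯ ≥ λ_n > 0. Then for every j ≥ 1, the entropy numbers satisfy e_j(ℰ, B_2^n) ≤ C sup_{1 ≤ m ≤ min(j,n)} 2^{-j/m} (λ_1 ⋯ λ_m)^{1/m} for a universal constant C, i.e. e_j(ℰ, B_2^n) ≤ C sup_{1 ≤ m ≤ min(j,n)} 2^{-j/m} w_m(ℰ). -/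
open MeasureTheory Metric
open scoped RealInnerProductSpace ENNReal Pointwise

namespace S18
open Set

variable {m : ℕ}

noncomputable def diagMap (μ : Fin m → ℝ) :
    EuclideanSpace ℝ (Fin m) →ₗ[ℝ] EuclideanSpace ℝ (Fin m) where
  toFun x := WithLp.toLp 2 (fun i => μ i * x i)
  map_add' x y := by ext i; simp [mul_add]
  map_smul' c x := by ext i; simp [smul_eq_mul]; ring

lemma det_diagMap (μ : Fin m → ℝ) : LinearMap.det (diagMap μ) = ∏ i, μ i := by
  rw [← LinearMap.det_toMatrix (PiLp.basisFun 2 ℝ (Fin m)), ← Matrix.det_diagonal]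
  congr 1
  ext i j
  simp [LinearMap.toMatrix_apply, diagMap, Matrix.diagonal, PiLp.basisFun_repr,
    PiLp.basisFun_apply]

/-- the diagonal ellipsoid -/
def Dell (μ : Fin m → ℝ) : Set (EuclideanSpace ℝ (Fin m)) :=
  {x | ∑ i, (x i / μ i) ^ 2 ≤ 1}

lemma norm_le_iff {x : EuclideanSpace ℝ (Fin m)} {c : ℝ} (hc : 0 ≤ c) :
    ‖x‖ ≤ c ↔ ∑ i, (x i) ^ 2 ≤ c ^ 2 := by
  rw [EuclideanSpace.norm_eq]
  constructor
  · intro h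
    have h2 : (Real.sqrt (∑ i, ‖x i‖ ^ 2)) ^ 2 ≤ c ^ 2 := by
      exact pow_le_pow_left₀ (Real.sqrt_nonneg _) h 2
    rw [Real.sq_sqrt (by positivity)] at h2
    simpa [Real.norm_eq_abs, sq_abs] using h2

  · intro h
    calc Real.sqrt (∑ i, ‖x i‖ ^ 2) ≤ Real.sqrt (c ^ 2) := by
          apply Real.sqrt_le_sqrt; simpa [Real.norm_eq_abs, sq_abs] using h
      _ = c := Real.sqrt_sq hc

lemma mem_Dell_iff {μ : Fin m → ℝ} {x : EuclideanSpace ℝ (Fin m)} :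
    x ∈ Dell μ ↔ ∑ i, (x i / μ i) ^ 2 ≤ 1 := Iff.rfl

lemma Dell_eq_image {μ : Fin m → ℝ} (hμ : ∀ i, 0 < μ i) :
    Dell μ = (diagMap μ) '' (closedBall 0 1) := by
  ext x
  constructor
  · intro hx
    refine ⟨(WithLp.toLp 2 (fun i => x i / μ i) : EuclideanSpace ℝ (Fin m)), ?_, ?_⟩
    · rw [mem_closedBall, dist_zero_right, norm_le_iff zero_le_one]
      simpa using (mem_Dell_iff.1 hx)
    · ext i
      simp only [diagMap, LinearMap.coe_mk, AddHom.coe_mk]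
      rw [mul_comm, div_mul_cancel₀ _ (hμ i).ne']
  · rintro ⟨y, hy, rfl⟩
    rw [mem_closedBall, dist_zero_right, norm_le_iff zero_le_one] at hy
    simp only [mem_Dell_iff, diagMap, LinearMap.coe_mk, AddHom.coe_mk]
    have : ∀ i, (μ i * y i / μ i) ^ 2 = (y i) ^ 2 := by
      intro i; rw [mul_comm, mul_div_assoc, div_self (hμ i).ne', mul_one]
    rw [Finset.sum_congr rfl (fun i _ => this i)]
    simpa using hy

lemma volume_Dell {μ : Fin m → ℝ} (hμ : ∀ i, 0 < μ i) :
    volume (Dell μ) = ENNReal.ofReal (∏ i, μ i) * volume (closedBall (0 : EuclideanSpace ℝ (Fin m)) 1) := by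
  rw [Dell_eq_image hμ, Measure.addHaar_image_linearMap, det_diagMap,
    abs_of_pos (Finset.prod_pos fun i _ => hμ i)]

lemma convex_Dell (μ : Fin m → ℝ) : Convex ℝ (Dell μ) := by
  have : Dell μ = (diagMap (fun i => (μ i)⁻¹)) ⁻¹' (closedBall 0 1) := by
    ext x
    simp [mem_Dell_iff, mem_closedBall, dist_zero_right, norm_le_iff zero_le_one, diagMap,
      div_eq_inv_mul]
  rw [this]
  exact (convex_closedBall _ _).linear_preimage _

lemma ball_subset_smul_Dell {μ : Fin m → ℝ} (hμ : ∀ i, 0 < μ i) {r : ℝ} (hr : 0 < r)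
    (hrμ : ∀ i, r ≤ μ i) :
    ball (0 : EuclideanSpace ℝ (Fin m)) (r / 2) ⊆ (1 / 2 : ℝ) • Dell μ := by
  intro y hy
  rw [mem_ball, dist_zero_right] at hy
  refine ⟨(2 : ℝ) • y, ?_, by simp⟩
  rw [mem_Dell_iff]
  have hy2 : ∑ i, (y i) ^ 2 ≤ (r / 2) ^ 2 := by
    rw [← norm_le_iff (by positivity)]; exact hy.le
  calc ∑ i, (((2 : ℝ) • y : EuclideanSpace ℝ (Fin m)) i / μ i) ^ 2
      ≤ ∑ i, (2 * y i / r) ^ 2 := by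
        apply Finset.sum_le_sum
        intro i _
        have : ((2 : ℝ) • y : EuclideanSpace ℝ (Fin m)) i = 2 * y i := by
          simp [smul_eq_mul]
        rw [this, div_pow, div_pow]
        apply div_le_div_of_nonneg_left (by positivity) (by positivity)
        exact pow_le_pow_left₀ hr.le (hrμ i) 2
    _ ≤ 1 := by
        have : ∀ i, (2 * y i / r) ^ 2 = 4 / r ^ 2 * (y i) ^ 2 := by intro i; ring
        rw [Finset.sum_congr rfl fun i _ => this i, ← Finset.mul_sum]
        have h4 : 4 / r ^ 2 * ((r / 2) ^ 2) = 1 := by field_simp; ring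
        calc 4 / r ^ 2 * ∑ i, (y i) ^ 2 ≤ 4 / r ^ 2 * (r / 2) ^ 2 := by
              apply mul_le_mul_of_nonneg_left hy2 (by positivity)
          _ = 1 := h4

lemma packing_count {μ : Fin m → ℝ} (hμ : ∀ i, 0 < μ i) {r : ℝ} (hr : 0 < r)
    (hrμ : ∀ i, r ≤ μ i) (T : Finset (EuclideanSpace ℝ (Fin m)))
    (hTD : ↑T ⊆ Dell μ) (hsep : ∀ x ∈ T, ∀ y ∈ T, x ≠ y → r ≤ dist x y) :
    (T.card : ℝ) * (r / 3) ^ m ≤ ∏ i, μ i := by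
  classical
  -- disjoint balls
  have hdisj : Set.Pairwise ↑T (Function.onFun Disjoint fun c : EuclideanSpace ℝ (Fin m) => ball c (r / 2)) := by
    intro x hx y hy hxy
    apply ball_disjoint_ball
    have := hsep x hx y hy hxy
    rw [← add_div]
    linarith
  have hmeas : ∀ c ∈ T, MeasurableSet (ball c (r / 2)) :=
    fun c _ => measurableSet_ball
  have hunion : (⋃ c ∈ T, ball c (r / 2)) ⊆ (3 / 2 : ℝ) • Dell μ := by
    have h32 : ((1 : ℝ) + 1 / 2) • Dell μ = (1 : ℝ) • Dell μ + (1 / 2 : ℝ) • Dell μ :=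
      (convex_Dell μ).add_smul (by norm_num) (by norm_num)
    intro z hz
    simp only [mem_iUnion, exists_prop] at hz
    obtain ⟨c, hc, hz⟩ := hz
    have hczc : z = c + (z - c) := by abel
    have hzc : z - c ∈ ball (0 : EuclideanSpace ℝ (Fin m)) (r / 2) := by
      rw [mem_ball, dist_zero_right, ← dist_eq_norm]
      exact hz
    have h1 : (3 / 2 : ℝ) • Dell μ = (1 : ℝ) • Dell μ + (1 / 2 : ℝ) • Dell μ := by
      rw [← h32]; norm_num
    rw [h1, hczc]
    exact Set.add_mem_add (by rw [one_smul]; exact hTD hc)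
      (ball_subset_smul_Dell hμ hr hrμ hzc)
  -- volume computation
  have hvol : (T.card : ℝ≥0∞) * volume (ball (0 : EuclideanSpace ℝ (Fin m)) (r / 2)) ≤
      volume ((3 / 2 : ℝ) • Dell μ) := by
    calc (T.card : ℝ≥0∞) * volume (ball (0 : EuclideanSpace ℝ (Fin m)) (r / 2))
        = ∑ c ∈ T, volume (ball c (r / 2)) := by
          rw [Finset.sum_congr rfl fun c _ => Measure.addHaar_ball_center volume c (r/2)]
          simp [Finset.sum_const, nsmul_eq_mul]
      _ = volume (⋃ c ∈ T, ball c (r / 2)) :=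
          (measure_biUnion_finset hdisj hmeas).symm
      _ ≤ _ := measure_mono hunion
  rcases Nat.eq_zero_or_pos m with hm | hm
  · subst hm
    simp only [pow_zero, mul_one, Finset.univ_eq_empty, Finset.prod_empty]
    have : Subsingleton (EuclideanSpace ℝ (Fin 0)) :=
      inferInstanceAs (Subsingleton (PiLp 2 fun _ : Fin 0 => ℝ))
    have hcard : T.card ≤ 1 := Finset.card_le_one.2 fun a _ b _ => Subsingleton.elim a b
    exact_mod_cast hcard
  haveI : Nonempty (Fin m) := ⟨⟨0, hm⟩⟩
  haveI : Nontrivial (EuclideanSpace ℝ (Fin m)) :=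
    inferInstance
  set V := volume (ball (0 : EuclideanSpace ℝ (Fin m)) 1) with hV
  have hball : volume (ball (0 : EuclideanSpace ℝ (Fin m)) (r / 2)) =
      ENNReal.ofReal ((r / 2) ^ m) * V := by
    rw [Measure.addHaar_ball volume _ (by positivity : (0:ℝ) ≤ r / 2),
      finrank_euclideanSpace_fin]
  have hDvol : volume ((3 / 2 : ℝ) • Dell μ) = ENNReal.ofReal ((3 / 2) ^ m * ∏ i, μ i) * V := by
    rw [Measure.addHaar_smul_of_nonneg volume (by norm_num : (0:ℝ) ≤ 3/2), volume_Dell hμ,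
      Measure.addHaar_closedBall_eq_addHaar_ball, finrank_euclideanSpace_fin,
      ENNReal.ofReal_mul (by positivity), mul_assoc]
  rw [hball, hDvol, ← mul_assoc] at hvol
  have hV0 : V ≠ 0 := (measure_ball_pos volume _ one_pos).ne'
  have hVt : V ≠ ⊤ := measure_ball_lt_top.ne
  rw [ENNReal.mul_le_mul_iff_left hV0 hVt] at hvol
  have hcast : (T.card : ℝ≥0∞) * ENNReal.ofReal ((r / 2) ^ m) =
      ENNReal.ofReal ((T.card : ℝ) * (r / 2) ^ m) := by
    rw [ENNReal.ofReal_mul (by positivity), ENNReal.ofReal_natCast]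
  rw [hcast, ENNReal.ofReal_le_ofReal_iff (mul_nonneg (by positivity) (Finset.prod_nonneg fun i _ => (hμ i).le))] at hvol
  have h32m : (0:ℝ) < (3 / 2) ^ m := by positivity
  rw [← mul_le_mul_iff_of_pos_left h32m]
  calc (3 / 2 : ℝ) ^ m * ((T.card : ℝ) * (r / 3) ^ m)
      = (T.card : ℝ) * ((3 / 2) * (r / 3)) ^ m := by rw [mul_pow]; ring
    _ = (T.card : ℝ) * (r / 2) ^ m := by norm_num
    _ ≤ (3 / 2) ^ m * ∏ i, μ i := hvol

lemma exists_cover {μ : Fin m → ℝ} (hμ : ∀ i, 0 < μ i) {r : ℝ} (hr : 0 < r)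
    (hrμ : ∀ i, r ≤ μ i) :
    ∃ T : Finset (EuclideanSpace ℝ (Fin m)), ↑T ⊆ Dell μ ∧
      (T.card : ℝ) * (r / 3) ^ m ≤ ∏ i, μ i ∧
      Dell μ ⊆ ⋃ c ∈ T, ball c r := by
  classical
  set 𝒮 : Set (Set (EuclideanSpace ℝ (Fin m))) :=
    {S | S ⊆ Dell μ ∧ S.Pairwise fun x y => r ≤ dist x y} with h𝒮
  obtain ⟨M, hM⟩ : ∃ M, Maximal (· ∈ 𝒮) M := by
    apply zorn_subset
    intro c hc hchain
    refine ⟨⋃₀ c, ⟨?_, ?_⟩, fun s hs => subset_sUnion_of_mem hs⟩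
    · exact sUnion_subset fun s hs => (hc hs).1
    · intro x hx y hy hxy
      obtain ⟨s₁, hs₁, hxs₁⟩ := hx
      obtain ⟨s₂, hs₂, hys₂⟩ := hy
      rcases eq_or_ne s₁ s₂ with rfl | hne
      · exact (hc hs₁).2 hxs₁ hys₂ hxy
      · rcases hchain hs₁ hs₂ hne with h | h
        · exact (hc hs₂).2 (h hxs₁) hys₂ hxy
        · exact (hc hs₁).2 hxs₁ (h hys₂) hxy
  have hMD : M ⊆ Dell μ := hM.prop.1
  have hMsep : M.Pairwise fun x y => r ≤ dist x y := hM.prop.2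
  have hfinsetcard : ∀ T : Finset (EuclideanSpace ℝ (Fin m)), ↑T ⊆ M →
      (T.card : ℝ) * (r / 3) ^ m ≤ ∏ i, μ i := by
    intro T hT
    exact packing_count hμ hr hrμ T (hT.trans hMD)
      (fun x hx y hy hxy => hMsep (hT hx) (hT hy) hxy)
  have hfin : M.Finite := by
    by_contra hinf
    have hinf : M.Infinite := hinf
    set N₀ : ℕ := ⌈(∏ i, μ i) / (r / 3) ^ m⌉₊ with hN₀
    obtain ⟨t, htM, htfin, htcard⟩ := hinf.exists_subset_ncard_eq (N₀ + 1)
    have h1 : ((htfin.toFinset.card : ℝ)) * (r / 3) ^ m ≤ ∏ i, μ i := by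
      apply hfinsetcard
      rw [Set.Finite.coe_toFinset]
      exact htM
    rw [Set.ncard_eq_toFinset_card _ htfin] at htcard
    rw [htcard] at h1
    have hrm : (0:ℝ) < (r / 3) ^ m := by positivity
    have h2 : ((N₀ : ℝ) + 1) ≤ (∏ i, μ i) / (r / 3) ^ m := by
      rw [le_div_iff₀ hrm]
      exact_mod_cast h1
    have h3 : (∏ i, μ i) / (r / 3) ^ m ≤ (N₀ : ℝ) := Nat.le_ceil _
    linarith
  refine ⟨hfin.toFinset, by rw [Set.Finite.coe_toFinset]; exact hMD, ?_, ?_⟩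
  · exact hfinsetcard _ (by rw [Set.Finite.coe_toFinset])
  · intro x hx
    by_contra hcov
    simp only [mem_iUnion, exists_prop, not_exists, not_and, Set.Finite.mem_toFinset,
      mem_ball] at hcov
    have hsepx : ∀ c ∈ M, r ≤ dist x c := fun c hc => not_lt.1 (hcov c hc)
    have hxM : x ∉ M := by
      intro hxM
      have := hsepx x hxM
      simp at this
      linarith
    have hins : insert x M ∈ 𝒮 := by
      constructor
      · exact Set.insert_subset hx hMD
      · rw [Set.pairwise_insert]
        exact ⟨hMsep, fun b hb _ => ⟨hsepx b hb, by rw [dist_comm]; exact hsepx b hb⟩⟩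
    have := hM.2 hins (Set.subset_insert x M)
    exact hxM (this (Set.mem_insert x M))

lemma exists_cover_pow {μ : Fin m → ℝ} (hμ : ∀ i, 0 < μ i) (hm : 0 < m) (j : ℕ)
    (hrμ : ∀ i, (3:ℝ) * ((2:ℝ) ^ (-(j:ℝ)/(m:ℝ)) * (∏ i, μ i) ^ ((1:ℝ)/(m:ℝ))) ≤ μ i) :
    ∃ T : Finset (EuclideanSpace ℝ (Fin m)), T.card ≤ 2 ^ j ∧
      Dell μ ⊆ ⋃ c ∈ T, ball c ((3:ℝ) * ((2:ℝ) ^ (-(j:ℝ)/(m:ℝ)) * (∏ i, μ i) ^ ((1:ℝ)/(m:ℝ)))) := by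
  set P : ℝ := ∏ i, μ i with hP
  have hP0 : 0 < P := Finset.prod_pos fun i _ => hμ i
  set s : ℝ := (2:ℝ) ^ (-(j:ℝ)/(m:ℝ)) * P ^ ((1:ℝ)/(m:ℝ)) with hs
  have hs0 : 0 < s := by positivity
  have hr0 : (0:ℝ) < 3 * s := by linarith
  obtain ⟨T, hTD, hcard, hcov⟩ := exists_cover hμ hr0 hrμ
  refine ⟨T, ?_, hcov⟩
  have hsm : s ^ m = 2 ^ (-(j:ℝ)) * P := by
    rw [hs, mul_pow]
    congr 1
    · rw [← Real.rpow_natCast ((2:ℝ) ^ (-(j:ℝ)/(m:ℝ))) m, ← Real.rpow_mul (by norm_num)]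
      congr 1
      field_simp
    · rw [← Real.rpow_natCast (P ^ ((1:ℝ)/(m:ℝ))) m, ← Real.rpow_mul hP0.le]
      rw [one_div, inv_mul_cancel₀ (by exact_mod_cast hm.ne' : (m:ℝ) ≠ 0), Real.rpow_one]
  have h2j : (2:ℝ) ^ (-(j:ℝ)) = ((2^j : ℕ) : ℝ)⁻¹ := by
    rw [Real.rpow_neg (by norm_num), Real.rpow_natCast]
    push_cast
    ring
  have hkey : (T.card : ℝ) * (2 ^ (-(j:ℝ)) * P) ≤ P := by
    calc (T.card : ℝ) * (2 ^ (-(j:ℝ)) * P) = (T.card : ℝ) * s ^ m := by rw [hsm]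
      _ = (T.card : ℝ) * ((3 * s) / 3) ^ m := by norm_num
      _ ≤ P := hcard
  rw [h2j] at hkey
  have h2jpos : (0:ℝ) < ((2^j : ℕ) : ℝ) := by positivity
  have : (T.card : ℝ) ≤ ((2^j : ℕ) : ℝ) := by
    have h := mul_le_mul_of_nonneg_left hkey h2jpos.le
    have heq : ((2^j:ℕ):ℝ) * ((T.card:ℝ) * ((((2^j:ℕ):ℝ))⁻¹ * P)) = (T.card:ℝ) * P := by
      field_simp
    rw [heq] at h
    exact le_of_mul_le_mul_right h hP0
  exact_mod_cast this

variable {n : ℕ}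

lemma filter_eq_image (hmn : m ≤ n) :
    Finset.univ.filter (fun jj : Fin n => (jj:ℕ) < m) =
      Finset.image (Fin.castLE hmn) Finset.univ := by
  ext jj
  simp only [Finset.mem_filter, Finset.mem_univ, true_and, Finset.mem_image]
  constructor
  · intro h
    exact ⟨⟨(jj:ℕ), h⟩, by ext; simp⟩
  · rintro ⟨i, rfl⟩
    simpa using i.2

lemma sum_castLE (hmn : m ≤ n) (f : Fin n → ℝ) :
    ∑ jj ∈ Finset.univ.filter (fun jj : Fin n => (jj:ℕ) < m), f jj =
      ∑ i : Fin m, f (Fin.castLE hmn i) := by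
  rw [filter_eq_image hmn, Finset.sum_image]
  intro a _ b _ h
  exact Fin.castLE_injective hmn h

lemma prod_castLE (hmn : m ≤ n) (f : Fin n → ℝ) :
    ∏ jj ∈ Finset.univ.filter (fun jj : Fin n => (jj:ℕ) < m), f jj =
      ∏ i : Fin m, f (Fin.castLE hmn i) := by
  rw [filter_eq_image hmn, Finset.prod_image]
  intro a _ b _ h
  exact Fin.castLE_injective hmn h

/-- extension by zero -/
def iota (hmn : m ≤ n) (a : EuclideanSpace ℝ (Fin m)) : EuclideanSpace ℝ (Fin n) :=
  WithLp.toLp 2 (fun jj => if h : (jj:ℕ) < m then a ⟨(jj:ℕ), h⟩ else 0)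

lemma iota_apply_lt (hmn : m ≤ n) (a : EuclideanSpace ℝ (Fin m)) (jj : Fin n)
    (h : (jj:ℕ) < m) : iota hmn a jj = a ⟨(jj:ℕ), h⟩ := by simp [iota, h]

lemma iota_apply_ge (hmn : m ≤ n) (a : EuclideanSpace ℝ (Fin m)) (jj : Fin n)
    (h : ¬ (jj:ℕ) < m) : iota hmn a jj = 0 := by simp [iota, h]

lemma dist_iota (hmn : m ≤ n) (a b : EuclideanSpace ℝ (Fin m)) :
    dist (iota hmn a) (iota hmn b) = dist a b := by
  rw [dist_eq_norm, dist_eq_norm, EuclideanSpace.norm_eq, EuclideanSpace.norm_eq]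
  congr 1
  calc ∑ jj : Fin n, ‖(iota hmn a - iota hmn b) jj‖ ^ 2
      = ∑ jj ∈ Finset.univ.filter (fun jj : Fin n => (jj:ℕ) < m),
          ‖(iota hmn a - iota hmn b) jj‖ ^ 2 := by
        refine (Finset.sum_subset (Finset.filter_subset _ _) ?_).symm
        intro x _ hx
        simp only [Finset.mem_filter, Finset.mem_univ, true_and] at hx
        rw [PiLp.sub_apply, iota_apply_ge hmn a x hx, iota_apply_ge hmn b x hx]
        simp
    _ = ∑ i : Fin m, ‖(iota hmn a - iota hmn b) (Fin.castLE hmn i)‖ ^ 2 :=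
        sum_castLE hmn _
    _ = ∑ i : Fin m, ‖(a - b) i‖ ^ 2 := by
        refine Finset.sum_congr rfl fun i _ => ?_
        have hlt : ((Fin.castLE hmn i : Fin n) : ℕ) < m := by simpa using i.2
        rw [PiLp.sub_apply, iota_apply_lt hmn a _ hlt, iota_apply_lt hmn b _ hlt,
          PiLp.sub_apply]
        congr 1 <;> · congr 1

lemma cover_n (lam : Fin n → ℝ) (hlam : ∀ i, 0 < lam i) {m : ℕ} (hm : 0 < m) (hmn : m ≤ n)
    (j : ℕ) {β : ℝ} (hβ : 0 ≤ β)
    (hlow : ∀ i : Fin n, (i:ℕ) < m → (3:ℝ) * ((2:ℝ) ^ (-(j:ℝ)/(m:ℝ)) *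
      (∏ i ∈ Finset.univ.filter fun i : Fin n => (i : ℕ) < m, lam i) ^ ((1:ℝ)/(m:ℝ))) ≤ lam i)
    (htail : ∀ i : Fin n, m ≤ (i:ℕ) → lam i ≤ β) :
    ∃ T : Finset (EuclideanSpace ℝ (Fin n)), T.card ≤ 2 ^ j ∧
      Dell lam ⊆ ⋃ c ∈ T, closedBall c
        ((3:ℝ) * ((2:ℝ) ^ (-(j:ℝ)/(m:ℝ)) *
          (∏ i ∈ Finset.univ.filter fun i : Fin n => (i : ℕ) < m, lam i) ^ ((1:ℝ)/(m:ℝ))) + β) := by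
  classical
  set μ : Fin m → ℝ := fun i => lam (Fin.castLE hmn i) with hμdef
  have hμ : ∀ i, 0 < μ i := fun i => hlam _
  have hprod : (∏ i ∈ Finset.univ.filter fun i : Fin n => (i : ℕ) < m, lam i) = ∏ i, μ i :=
    prod_castLE hmn lam
  set r : ℝ := (3:ℝ) * ((2:ℝ) ^ (-(j:ℝ)/(m:ℝ)) *
      (∏ i ∈ Finset.univ.filter fun i : Fin n => (i : ℕ) < m, lam i) ^ ((1:ℝ)/(m:ℝ))) with hrdef
  have hrμ : ∀ i : Fin m, (3:ℝ) * ((2:ℝ) ^ (-(j:ℝ)/(m:ℝ)) * (∏ i, μ i) ^ ((1:ℝ)/(m:ℝ))) ≤ μ i := by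
    intro i
    rw [← hprod]
    exact hlow (Fin.castLE hmn i) (by simpa using i.2)
  obtain ⟨T₀, hcard, hcov⟩ := exists_cover_pow hμ hm j hrμ
  refine ⟨T₀.image (iota hmn), le_trans (Finset.card_image_le) hcard, ?_⟩
  intro x hx
  -- the truncated point
  set xm : EuclideanSpace ℝ (Fin m) := (WithLp.toLp 2 (fun i => x (Fin.castLE hmn i))) with hxm
  have hxmD : xm ∈ Dell μ := by
    rw [mem_Dell_iff]
    calc ∑ i, (xm i / μ i) ^ 2
        = ∑ jj ∈ Finset.univ.filter fun jj : Fin n => (jj:ℕ) < m, (x jj / lam jj) ^ 2 := by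
          rw [sum_castLE hmn (fun jj => (x jj / lam jj) ^ 2)]
      _ ≤ ∑ jj : Fin n, (x jj / lam jj) ^ 2 :=
          Finset.sum_le_sum_of_subset_of_nonneg (Finset.filter_subset _ _)
            (fun jj _ _ => by positivity)
      _ ≤ 1 := hx
  obtain ⟨c, hcT, hc⟩ : ∃ c ∈ T₀, xm ∈ ball c
      ((3:ℝ) * ((2:ℝ) ^ (-(j:ℝ)/(m:ℝ)) * (∏ i, μ i) ^ ((1:ℝ)/(m:ℝ)))) := by
    have := hcov hxmD
    simpa only [mem_iUnion, exists_prop] using this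
  have hrr : (3:ℝ) * ((2:ℝ) ^ (-(j:ℝ)/(m:ℝ)) * (∏ i, μ i) ^ ((1:ℝ)/(m:ℝ))) = r := by
    rw [hrdef, hprod]
  rw [hrr, mem_ball] at hc
  -- tail estimate : dist x (iota xm) ≤ β
  have htailest : dist x (iota hmn xm) ≤ β := by
    rw [dist_eq_norm]
    rw [norm_le_iff hβ]
    have hterm : ∀ jj : Fin n, ((x - iota hmn xm) jj) ^ 2 =
        if (jj:ℕ) < m then 0 else (x jj) ^ 2 := by
      intro jj
      by_cases h : (jj:ℕ) < m
      · simp only [h, if_true]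
        rw [PiLp.sub_apply, iota_apply_lt hmn xm jj h]
        have : xm ⟨(jj:ℕ), h⟩ = x jj := by
          rw [hxm]
          rfl
      
        rw [this, sub_self]
        ring
      · simp only [h, if_false]
        rw [PiLp.sub_apply, iota_apply_ge hmn xm jj h, sub_zero]
    rw [Finset.sum_congr rfl fun jj _ => hterm jj]
    rw [Finset.sum_ite, Finset.sum_const_zero, zero_add]
    calc ∑ jj ∈ Finset.univ.filter fun jj : Fin n => ¬ (jj:ℕ) < m, (x jj) ^ 2
        ≤ ∑ jj ∈ Finset.univ.filter fun jj : Fin n => ¬ (jj:ℕ) < m,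
            β ^ 2 * (x jj / lam jj) ^ 2 := by
          refine Finset.sum_le_sum fun jj hjj => ?_
          simp only [Finset.mem_filter, Finset.mem_univ, true_and, not_lt] at hjj
          have hl : lam jj ≤ β := htail jj hjj
          have h0 : 0 < lam jj := hlam jj
          have : (x jj) ^ 2 = (lam jj) ^ 2 * (x jj / lam jj) ^ 2 := by
            field_simp
          rw [this]
          apply mul_le_mul_of_nonneg_right _ (by positivity)
          exact pow_le_pow_left₀ h0.le hl 2
      _ = β ^ 2 * ∑ jj ∈ Finset.univ.filter fun jj : Fin n => ¬ (jj:ℕ) < m,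
            (x jj / lam jj) ^ 2 := by rw [Finset.mul_sum]
      _ ≤ β ^ 2 * 1 := by
          apply mul_le_mul_of_nonneg_left _ (by positivity)
          calc ∑ jj ∈ Finset.univ.filter fun jj : Fin n => ¬ (jj:ℕ) < m, (x jj / lam jj) ^ 2
              ≤ ∑ jj : Fin n, (x jj / lam jj) ^ 2 :=
                Finset.sum_le_sum_of_subset_of_nonneg (Finset.filter_subset _ _)
                  (fun jj _ _ => by positivity)
            _ ≤ 1 := hx
      _ = β ^ 2 := mul_one _
  refine mem_iUnion.2 ⟨iota hmn c, mem_iUnion.2 ⟨Finset.mem_image_of_mem _ hcT, ?_⟩⟩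
  rw [mem_closedBall]
  calc dist x (iota hmn c) ≤ dist x (iota hmn xm) + dist (iota hmn xm) (iota hmn c) :=
        dist_triangle _ _ _
    _ ≤ β + dist xm c := by
        rw [dist_iota]
        exact add_le_add_left htailest _
    _ ≤ β + r := by linarith
    _ = r + β := by ring

lemma ek_le_of_cover (A : Set (EuclideanSpace ℝ (Fin n))) (k : ℕ) {t : ℝ} (ht : 0 < t)
    (T : Finset (EuclideanSpace ℝ (Fin n))) (hT : T.card ≤ 2 ^ k)
    (hcov : A ⊆ ⋃ c ∈ T, closedBall c t) :
    ek A (closedBall (0 : EuclideanSpace ℝ (Fin n)) 1) k ≤ t := by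
  unfold ek
  apply csInf_le ⟨0, fun s hs => hs.1.le⟩
  refine ⟨ht, ?_⟩
  have hB : t • closedBall (0 : EuclideanSpace ℝ (Fin n)) 1 = closedBall 0 t := by
    rw [_root_.smul_closedBall _ _ zero_le_one]
    simp [Real.norm_eq_abs, abs_of_pos ht]
  have h1 : covN A (t • closedBall (0 : EuclideanSpace ℝ (Fin n)) 1) ≤ T.card := by
    unfold covN
    apply Nat.sInf_le
    refine ⟨T, rfl, ?_⟩
    simp only [hB, vadd_closedBall, vadd_eq_add, add_zero]
    exact hcov
  exact h1.trans hT

open scoped Classical in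
lemma preimage_cover (u : OrthonormalBasis (Fin n) ℝ (EuclideanSpace ℝ (Fin n)))
    (A : Set (EuclideanSpace ℝ (Fin n))) (T : Finset (EuclideanSpace ℝ (Fin n))) (t : ℝ)
    (h : A ⊆ ⋃ c ∈ T, closedBall c t) :
    (⇑u.repr ⁻¹' A) ⊆ ⋃ c ∈ T.image (⇑u.repr.symm), closedBall c t := by
  classical
  intro x hx
  obtain ⟨c, hcT, hc⟩ : ∃ c ∈ T, u.repr x ∈ closedBall c t := by
    simpa only [mem_iUnion, exists_prop] using h hx
  refine mem_iUnion.2 ⟨u.repr.symm c, mem_iUnion.2 ⟨Finset.mem_image_of_mem _ hcT, ?_⟩⟩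
  rw [mem_closedBall] at *
  calc dist x (u.repr.symm c) = dist (u.repr x) (u.repr (u.repr.symm c)) :=
        (u.repr.dist_map _ _).symm
    _ = dist (u.repr x) c := by rw [LinearIsometryEquiv.apply_symm_apply]
    _ ≤ t := hc

lemma Dell_subset_ball (lam : Fin n → ℝ) (hlam : ∀ i, 0 < lam i)
    (hdec : ∀ i k : Fin n, i ≤ k → lam k ≤ lam i) (i0 : Fin n) (hi0 : (i0:ℕ) = 0) :
    Dell lam ⊆ closedBall (0 : EuclideanSpace ℝ (Fin n)) (lam i0) := by
  intro x hx
  rw [mem_closedBall, dist_zero_right, norm_le_iff (hlam _).le]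
  calc ∑ k, (x k) ^ 2 ≤ ∑ k, (lam i0) ^ 2 * (x k / lam k) ^ 2 := by
        refine Finset.sum_le_sum fun k _ => ?_
        have hk : lam k ≤ lam i0 := hdec i0 k (by rw [Fin.le_def]; omega)
        have h0 : 0 < lam k := hlam k
        have hxk : (x k) ^ 2 = (lam k) ^ 2 * (x k / lam k) ^ 2 := by field_simp
        rw [hxk]
        exact mul_le_mul_of_nonneg_right (pow_le_pow_left₀ h0.le hk 2) (by positivity)
    _ = (lam i0) ^ 2 * ∑ k, (x k / lam k) ^ 2 := by rw [Finset.mul_sum]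
    _ ≤ (lam i0) ^ 2 * 1 := mul_le_mul_of_nonneg_left hx (by positivity)
    _ = (lam i0) ^ 2 := mul_one _

end S18

open S18 in
/-- entropy numbers of ellipsoids:
`e_j(ℰ, B₂ⁿ) ≤ C sup_{1 ≤ m ≤ min(j,n)} 2^{-j/m} (λ₁⋯λ_m)^{1/m}`. -/
theorem stmt18 : ∃ C : ℝ, 0 < C ∧ ∀ n : ℕ, 1 ≤ n →
    ∀ (u : OrthonormalBasis (Fin n) ℝ (EuclideanSpace ℝ (Fin n)))
      (lam : Fin n → ℝ), (∀ i, 0 < lam i) →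
      (∀ i j : Fin n, i ≤ j → lam j ≤ lam i) →
    ∀ ℰ : Set (EuclideanSpace ℝ (Fin n)),
      ℰ = {x | ∑ i, (⟪x, u i⟫ / lam i) ^ 2 ≤ 1} →
    ∀ j : ℕ, 1 ≤ j →
      ek ℰ (closedBall (0 : EuclideanSpace ℝ (Fin n)) 1) j ≤
        C * sSup { r | ∃ m : ℕ, 1 ≤ m ∧ m ≤ min j n ∧
          r = (2 : ℝ) ^ (-(j : ℝ) / m) *
            (∏ i ∈ Finset.univ.filter fun i : Fin n => (i : ℕ) < m, lam i) ^ ((1 : ℝ) / m) } := by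
  classical
  refine ⟨6, by norm_num, ?_⟩
  intro n hn u lam hlam hdec ℰ hℰ j hj
  set F : ℕ → ℝ := fun m => (2 : ℝ) ^ (-(j : ℝ) / m) *
      (∏ i ∈ Finset.univ.filter fun i : Fin n => (i : ℕ) < m, lam i) ^ ((1 : ℝ) / m) with hF
  set Sset : Set ℝ := { r | ∃ m : ℕ, 1 ≤ m ∧ m ≤ min j n ∧ r = F m } with hSset
  have hprodpos : ∀ m : ℕ, (0:ℝ) < ∏ i ∈ Finset.univ.filter fun i : Fin n => (i : ℕ) < m, lam i :=
    fun m => Finset.prod_pos fun i _ => hlam i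
  have hFpos : ∀ m, 0 < F m := by
    intro m
    rw [hF]
    have := hprodpos m
    positivity
  have hfin : Sset.Finite := by
    apply Set.Finite.subset ((Set.finite_Icc 1 (min j n)).image F)
    rintro r ⟨m, h1, h2, rfl⟩
    exact ⟨m, ⟨h1, h2⟩, rfl⟩
  have hbdd : BddAbove Sset := hfin.bddAbove
  have hle : ∀ m, 1 ≤ m → m ≤ min j n → F m ≤ sSup Sset :=
    fun m h1 h2 => le_csSup hbdd ⟨m, h1, h2, rfl⟩
  have hminjn : 1 ≤ min j n := by omega
  have hS0 : 0 < sSup Sset := lt_of_lt_of_le (hFpos 1) (hle 1 le_rfl hminjn)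
  -- ellipsoid as preimage
  have hE : ℰ = ⇑u.repr ⁻¹' (Dell lam) := by
    rw [hℰ]
    ext x
    simp only [Set.mem_setOf_eq, Set.mem_preimage, mem_Dell_iff]
    have h1 : ∀ i, u.repr x i = inner ℝ x (u i) := fun i => by
      rw [u.repr_apply_apply, real_inner_comm]
    have h2 : ∑ i, ((u.repr x) i / lam i) ^ 2 = ∑ i, ((inner ℝ x (u i) : ℝ) / lam i) ^ 2 :=
      Finset.sum_congr rfl fun i _ => by rw [h1 i]
    rw [h2]
  set P : ℕ → Prop := fun m => 1 ≤ m ∧ m ≤ min j n ∧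
      ∀ i : Fin n, (i:ℕ) < m → 3 * F m ≤ lam i with hPdef
  by_cases hex : ∃ m, P m
  · obtain ⟨m₀, hPm₀⟩ := hex
    set m := Nat.findGreatest P (min j n) with hm
    have hPm : P m := Nat.findGreatest_spec hPm₀.2.1 hPm₀
    obtain ⟨hm1, hmmin, hlow⟩ := hPm
    have hmn : m ≤ n := hmmin.trans (min_le_right _ _)
    have hFm : F m ≤ sSup Sset := hle m hm1 hmmin
    obtain ⟨β, hβ0, hβle, htail⟩ : ∃ β : ℝ, 0 ≤ β ∧ β ≤ 3 * sSup Sset ∧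
        ∀ i : Fin n, m ≤ (i:ℕ) → lam i ≤ β := by
      by_cases hmn' : m < n
      · refine ⟨lam ⟨m, hmn'⟩, (hlam _).le, ?_, ?_⟩
        · by_cases hmlt : m < min j n
          · have hnP : ¬ P (m+1) := Nat.findGreatest_is_greatest (n := min j n)
              (show m < m + 1 by omega) (by omega)
            obtain ⟨i, hi, hilt⟩ : ∃ i : Fin n, (i:ℕ) < m + 1 ∧ lam i < 3 * F (m+1) := by
              by_contra hno
              push_neg at hno
              exact hnP ⟨by omega, by omega, fun i hi => hno i hi⟩
            have h1 : lam ⟨m, hmn'⟩ ≤ lam i := hdec i ⟨m, hmn'⟩ (by rw [Fin.le_def]; simp; omega)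
            have h2 : F (m+1) ≤ sSup Sset := hle (m+1) (by omega) (by omega)
            linarith
          · -- m = min j n and m < n, so m = j
            have hmj : m = j := by omega
            -- lam ⟨m⟩ ≤ geometric mean = 2 * F m
            set w : ℝ := (∏ i ∈ Finset.univ.filter fun i : Fin n => (i : ℕ) < m, lam i) ^
              ((1 : ℝ) / m) with hw
            have hβw : lam ⟨m, hmn'⟩ ≤ w := by
              have hcard : (Finset.univ.filter fun i : Fin n => (i : ℕ) < m).card = m := by
                rw [filter_eq_image hmn, Finset.card_image_of_injective _
                  (Fin.castLE_injective hmn), Finset.card_univ, Fintype.card_fin]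
              have hprodge : lam ⟨m, hmn'⟩ ^ m ≤
                  ∏ i ∈ Finset.univ.filter fun i : Fin n => (i : ℕ) < m, lam i := by
                calc lam ⟨m, hmn'⟩ ^ m
                    = ∏ _i ∈ Finset.univ.filter fun i : Fin n => (i : ℕ) < m, lam ⟨m, hmn'⟩ := by
                      rw [Finset.prod_const, hcard]
                  _ ≤ _ := by
                      refine Finset.prod_le_prod (fun i _ => (hlam _).le) fun i hi => ?_
                      simp only [Finset.mem_filter, Finset.mem_univ, true_and] at hi
                      exact hdec i ⟨m, hmn'⟩ (by rw [Fin.le_def]; simp; omega)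
              have hm0 : (m:ℝ) ≠ 0 := by exact_mod_cast (by omega : m ≠ 0)
              calc lam ⟨m, hmn'⟩ = ((lam ⟨m, hmn'⟩) ^ m) ^ ((1:ℝ)/m) := by
                    rw [← Real.rpow_natCast (lam ⟨m, hmn'⟩) m, ← Real.rpow_mul (hlam _).le,
                      mul_one_div, div_self hm0, Real.rpow_one]
                _ ≤ w := by
                    rw [hw]
                    exact Real.rpow_le_rpow (pow_nonneg (hlam _).le m) hprodge (by positivity)
            have hhalf : (2:ℝ) ^ (-(j:ℝ)/(m:ℝ)) = 1/2 := by
              rw [hmj]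
              have hj0 : (j:ℝ) ≠ 0 := by exact_mod_cast (by omega : j ≠ 0)
              rw [neg_div, div_self hj0, Real.rpow_neg_one]
              norm_num
            have h2F : w = 2 * F m := by
              simp only [hF, hhalf, ← hw]
              ring
            nlinarith [hS0, hFm]
        · intro i hi
          exact hdec ⟨m, hmn'⟩ i (by rw [Fin.le_def]; simpa using hi)
      · have hmn'' : m = n := by omega
        refine ⟨0, le_rfl, by positivity, fun i hi => absurd i.2 (by omega)⟩
    obtain ⟨T, hTcard, hTcov⟩ := cover_n lam hlam (by omega : 0 < m) hmn j hβ0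
      (fun i hi => hlow i hi) htail
    have hrF : 3 * ((2:ℝ) ^ (-(j:ℝ)/(m:ℝ)) *
        (∏ i ∈ Finset.univ.filter fun i : Fin n => (i : ℕ) < m, lam i) ^ ((1:ℝ)/(m:ℝ))) = 3 * F m := by
      simp only [hF]
    rw [hrF] at hTcov
    have hcov2 := preimage_cover u _ T _ hTcov
    rw [← hE] at hcov2
    have hek := ek_le_of_cover ℰ j (t := 3 * F m + β)
      (by have := hFpos m; linarith)
      (T.image u.repr.symm) ((Finset.card_image_le).trans hTcard) hcov2
    calc ek ℰ (closedBall (0 : EuclideanSpace ℝ (Fin n)) 1) j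
        ≤ 3 * F m + β := hek
      _ ≤ 3 * sSup Sset + 3 * sSup Sset := by linarith
      _ = 6 * sSup Sset := by ring
  · -- no good m exists; in particular m = 1 fails, so lam at 0 is tiny
    have hnP1 : ¬ P 1 := fun h => hex ⟨1, h⟩
    obtain ⟨i, hi1, hlt⟩ : ∃ i : Fin n, (i:ℕ) < 1 ∧ lam i < 3 * F 1 := by
      by_contra hno
      push_neg at hno
      exact hnP1 ⟨le_rfl, hminjn, fun i hi => hno i hi⟩
    have hi0 : (i:ℕ) = 0 := by omega
    have hDsub := Dell_subset_ball lam hlam hdec i hi0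
    have hcov1 : Dell lam ⊆ ⋃ c ∈ ({(0 : EuclideanSpace ℝ (Fin n))} : Finset _), closedBall c (lam i) := by
      simpa using hDsub
    have hcov2 := preimage_cover u _ _ _ hcov1
    rw [← hE] at hcov2
    have hek := ek_le_of_cover ℰ j (t := lam i) (hlam i)
      (({(0 : EuclideanSpace ℝ (Fin n))} : Finset _).image u.repr.symm)
      (le_trans Finset.card_image_le (by simp [Nat.one_le_two_pow])) hcov2
    have hF1 : F 1 ≤ sSup Sset := hle 1 le_rfl hminjn
    calc ek ℰ (closedBall (0 : EuclideanSpace ℝ (Fin n)) 1) j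
        ≤ lam i := hek
      _ ≤ 3 * F 1 := hlt.le
      _ ≤ 6 * sSup Sset := by linarith
end
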